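/- Let x be a non-uniform lattice of either class, δ ∈ ℝ and λ ∈ ℂ. Define the operators L[y](z) := σ(z)·Δ_{δ−1}∇_δ y(z) + τ_δ(z)·Δ_δ y(z) + λ·y(z) and L*[w](z) := Δ_{δ−1}[ z ↦ ∇(σ·w)(z)/∇x_δ(z) ](z) − (1/Δx_{δ−1}(z))·∇[ z ↦ w(z)·τ_δ(z)·Δx_{δ−1}(z)/Δx_δ(z) ](z) + λ·w(z). Suppose ρ : ℂ → ℂ satisfies the Pearson-type equation Δ(σ·ρ)(z) = τ_δ(z)·ρ(z)·Δx_{δ−1}(z) for all z ∈ ℂ. Then for every function y : ℂ → ℂ and every z ∈ ℂ at which all difference-quotient denominators Δx_{δ−1}, Δx_δ, ∇x_δ occurring are nonzero, L*[ρ·y](z) = ρ(z)·L[y](z). (Proposition 3.1) -/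
import Mathlib


noncomputable section

open Finset

/-- `x` is a non-uniform lattice of one of the two classes (q-quadratic with
`q = e^w`, or quadratic), together with its associated functions `α = a` and
`γ = g`. -/
def IsNonUniformLattice (w : ℂ) (x : ℂ → ℂ) (a g : ℝ → ℂ) : Prop :=
  (Complex.exp w ≠ 1 ∧
    ∃ c1 c2 c3 : ℂ, c1 * c2 ≠ 0 ∧
      (∀ s : ℂ, x s = c1 * Complex.exp (s * w) + c2 * Complex.exp (-(s * w)) + c3) ∧
      (∀ μ : ℝ, a μ =
        (Complex.exp ((μ : ℂ) / 2 * w) + Complex.exp (-((μ : ℂ) / 2 * w))) / 2) ∧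
      (∀ μ : ℝ, g μ =
        (Complex.exp ((μ : ℂ) / 2 * w) - Complex.exp (-((μ : ℂ) / 2 * w))) /
          (Complex.exp ((1 : ℂ) / 2 * w) - Complex.exp (-((1 : ℂ) / 2 * w))))) ∨
  (∃ c1 c2 c3 : ℂ, c1 ≠ 0 ∧
    (∀ s : ℂ, x s = c1 * s ^ 2 + c2 * s + c3) ∧
    (∀ μ : ℝ, a μ = 1) ∧ (∀ μ : ℝ, g μ = (μ : ℂ)))

/-- `xl x ν s = x_ν(s) = x (s + ν/2)`. -/
def xl (x : ℂ → ℂ) (ν : ℝ) (s : ℂ) : ℂ := x (s + (ν : ℂ) / 2)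

/-- `σ(z) = σ̃(x z) - (1/2)·τ̃(x z)·∇x₁(z)`. -/
def sig (x : ℂ → ℂ) (st tt : Polynomial ℂ) (z : ℂ) : ℂ :=
  st.eval (x z) - (1 / 2) * tt.eval (x z) * (xl x 1 z - xl x 1 (z - 1))

/-- `κ_ν = α(ν-1)·τ̃' + (1/2)·γ(ν-1)·σ̃''`. -/
def kap (a g : ℝ → ℂ) (st tt : Polynomial ℂ) (ν : ℝ) : ℂ :=
  a (ν - 1) * tt.coeff 1 + (1 / 2) * g (ν - 1) * (2 * st.coeff 2)

/-- Backward difference quotient `∇_ν f (z) = ∇f(z)/∇x_ν(z)`. -/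
def nab (x : ℂ → ℂ) (ν : ℝ) (f : ℂ → ℂ) (z : ℂ) : ℂ :=
  (f z - f (z - 1)) / (xl x ν z - xl x ν (z - 1))

/-- Forward difference quotient `Δ_ν f (z) = Δf(z)/Δx_ν(z)`. -/
def del (x : ℂ → ℂ) (ν : ℝ) (f : ℂ → ℂ) (z : ℂ) : ℂ :=
  (f (z + 1) - f z) / (xl x ν (z + 1) - xl x ν z)

/-- Generalized power `[x_α(s) - x_α(z)]^{(m)} = ∏_{k=0}^{m-1} (x_α(s) - x_α(z-k))`. -/
def gp (x : ℂ → ℂ) (m : ℕ) (al : ℝ) (s z : ℂ) : ℂ :=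
  ∏ k ∈ Finset.range m, (xl x al s - xl x al (z - (k : ℂ)))

/-- The defining relation for the family `τ_ν = T ν`:
`τ_ν(z)·∇x_{ν+1}(z) = σ(z+ν) - σ(z) + τ(z+ν)·∇x₁(z+ν)`. -/
def TauFamily (x : ℂ → ℂ) (st tt : Polynomial ℂ) (T : ℝ → ℂ → ℂ) : Prop :=
  ∀ (ν : ℝ) (z : ℂ),
    T ν z * (xl x (ν + 1) z - xl x (ν + 1) (z - 1)) =
      sig x st tt (z + (ν : ℂ)) - sig x st tt z +
        tt.eval (x (z + (ν : ℂ))) * (xl x 1 (z + (ν : ℂ)) - xl x 1 (z + (ν : ℂ) - 1))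

/-- The operator `L[y](z) = σ(z)·Δ_{δ-1}∇_δ y(z) + τ_δ(z)·Δ_δ y(z) + λ·y(z)`. -/
def Lop (x : ℂ → ℂ) (st tt : Polynomial ℂ) (T : ℝ → ℂ → ℂ) (δ : ℝ) (lam : ℂ)
    (y : ℂ → ℂ) (z : ℂ) : ℂ :=
  sig x st tt z * del x (δ - 1) (nab x δ y) z + T δ z * del x δ y z + lam * y z

/-- The adjoint operator
`L*[w](z) = Δ_{δ-1}[∇(σ·w)/∇x_δ](z) - (1/Δx_{δ-1}(z))·∇[w·τ_δ·Δx_{δ-1}/Δx_δ](z) + λ·w(z)`. -/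
def LstarOp (x : ℂ → ℂ) (st tt : Polynomial ℂ) (T : ℝ → ℂ → ℂ) (δ : ℝ) (lam : ℂ)
    (wf : ℂ → ℂ) (z : ℂ) : ℂ :=
  let g2 : ℂ → ℂ := fun u =>
    wf u * T δ u * (xl x (δ - 1) (u + 1) - xl x (δ - 1) u) /
      (xl x δ (u + 1) - xl x δ u)
  del x (δ - 1) (nab x δ (fun u => sig x st tt u * wf u)) z -
    (1 / (xl x (δ - 1) (z + 1) - xl x (δ - 1) z)) * (g2 z - g2 (z - 1)) +
    lam * wf z

private lemma prop3_1_key {s1 s0 sm r1 r0 rm y1 y0 ym t0 tm D0 D1 D2 d lam : ℂ}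
    (hD0 : D0 ≠ 0) (hD1 : D1 ≠ 0) (hD2 : D2 ≠ 0)
    (h1 : s1 * r1 - s0 * r0 = t0 * r0 * D0)
    (h2 : s0 * r0 - sm * rm = tm * rm * d) :
    ((s1 * (r1 * y1) - s0 * (r0 * y0)) / D1 - (s0 * (r0 * y0) - sm * (rm * ym)) / D2) / D0 -
      (1 / D0) * (r0 * y0 * t0 * D0 / D1 - rm * ym * tm * d / D2) + lam * (r0 * y0) =
    r0 * (s0 * (((y1 - y0) / D1 - (y0 - ym) / D2) / D0) + t0 * ((y1 - y0) / D1) + lam * y0) := by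
  have h1' : s1 * r1 = t0 * r0 * D0 + s0 * r0 := by linear_combination h1
  have h2' : sm * rm = s0 * r0 - tm * rm * d := by linear_combination -h2
  rw [show s1 * (r1 * y1) = (t0 * r0 * D0 + s0 * r0) * y1 from by rw [← mul_assoc, h1'],
    show sm * (rm * ym) = (s0 * r0 - tm * rm * d) * ym from by rw [← mul_assoc, h2']]
  field_simp
  ring

/-- Proposition 3.1: `L*[ρ·y](z) = ρ(z)·L[y](z)`. -/
theorem prop3_1
    (w : ℂ) (x : ℂ → ℂ) (a g : ℝ → ℂ)
    (hlat : IsNonUniformLattice w x a g)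
    (st tt : Polynomial ℂ) (hst : st.degree ≤ 2) (htt : tt.degree ≤ 1)
    (T : ℝ → ℂ → ℂ) (hT : TauFamily x st tt T) (δ : ℝ) (lam : ℂ)
    (ρ : ℂ → ℂ)
    (hρ : ∀ z : ℂ, sig x st tt (z + 1) * ρ (z + 1) - sig x st tt z * ρ z =
      T δ z * ρ z * (xl x (δ - 1) (z + 1) - xl x (δ - 1) z)) :
    ∀ (y : ℂ → ℂ) (z : ℂ),
      xl x (δ - 1) (z + 1) - xl x (δ - 1) z ≠ 0 →
      xl x δ (z + 1) - xl x δ z ≠ 0 →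
      xl x δ z - xl x δ (z - 1) ≠ 0 →
      LstarOp x st tt T δ lam (fun u => ρ u * y u) z =
        ρ z * Lop x st tt T δ lam y z := by
  intro y z hD0 hD1 hD2
  have h1 := hρ z
  have h2 := hρ (z - 1)
  have e2 : z - 1 + 1 = z := by ring
  rw [e2] at h2
  simp only [LstarOp, Lop, del, nab]
  have e1 : z + 1 - 1 = z := by ring
  rw [e1, e2]
  linear_combination prop3_1_key (y1 := y (z+1)) (y0 := y z) (ym := y (z-1)) (lam := lam)
    hD0 hD1 hD2 h1 h2
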